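/- Let m₁, m₂, m₃, m₄ ∈ ℝ satisfy (m₁ − m₄)² + 4m₂m₃ < 0 and m₃ > 0. Define M(φ) = m₁cos²φ + (m₂ + m₃)sinφ·cosφ + m₄sin²φ and W(φ) = m₃cos²φ + (m₄ − m₁)sinφ·cosφ − m₂sin²φ. Then W(φ) > 0 for all φ, and (1/(2π))·∫₀^{2π} M(φ)/W(φ) dφ = (m₁ + m₄)/√(−4m₂m₃ − (m₁ − m₄)²). -/

import Mathlib

open Real

private lemma alg16 (msum m2 m3 d W N Nd M : ℝ) (hd0 : 0 < d) (hW0 : 0 < W)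
    (hsum : 0 < d + m3 - m2)
    (hN2 : N ^ 2 = (m3 - m2) * W - W ^ 2 - d ^ 2 / 4)
    (hNd : Nd = m3 - m2 - 2 * W)
    (hM : M = msum / 2 - N) :
    -(1/2) * (2 * N / W) + msum / d *
      (1 + 1 / (1 + (N / (W + d/2)) ^ 2) * ((Nd * (W + d/2) - N * (2 * N)) / (W + d/2) ^ 2))
      = M / W := by
  have hden : 0 < W + d / 2 := by linarith
  have e2 : (W + d/2) ^ 2 + N ^ 2 = W * (d + m3 - m2) := by linear_combination hN2
  have e1 : Nd * (W + d/2) - N * (2 * N) = (d + m3 - m2) * (d/2 - W) := by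
    linear_combination (W + d/2) * hNd - 2 * hN2
  have h1g : 1 + (N / (W + d/2)) ^ 2 = W * (d + m3 - m2) / (W + d/2) ^ 2 := by
    field_simp
    linear_combination 4 * hN2
  rw [h1g, e1, hM]
  field_simp
  ring

/-- If the matrix `[[m₁,m₂],[m₃,m₄]]` has non-real complex conjugate eigenvalues
(`(m₁−m₄)² + 4m₂m₃ < 0`) and `m₃ > 0`, then the angular coefficient
`W(φ) = m₃cos²φ + (m₄−m₁)sinφcosφ − m₂sin²φ` is positive for all `φ`, and the average of
`M(φ)/W(φ)` with `M(φ) = m₁cos²φ + (m₂+m₃)sinφcosφ + m₄sin²φ` over one period equals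
`(m₁+m₄)/√(−4m₂m₃ − (m₁−m₄)²)`. -/
theorem stmt16 (m1 m2 m3 m4 : ℝ)
    (hdisc : (m1 - m4) ^ 2 + 4 * m2 * m3 < 0) (hm3 : 0 < m3) :
    (∀ φ : ℝ, 0 < m3 * cos φ ^ 2 + (m4 - m1) * sin φ * cos φ - m2 * sin φ ^ 2) ∧
    (1 / (2 * π)) * (∫ φ in (0:ℝ)..(2 * π),
        (m1 * cos φ ^ 2 + (m2 + m3) * sin φ * cos φ + m4 * sin φ ^ 2) /
        (m3 * cos φ ^ 2 + (m4 - m1) * sin φ * cos φ - m2 * sin φ ^ 2))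
      = (m1 + m4) / Real.sqrt (-4 * m2 * m3 - (m1 - m4) ^ 2) := by
  have hD : 0 < -4 * m2 * m3 - (m1 - m4) ^ 2 := by linarith
  have hd0 : 0 < Real.sqrt (-4 * m2 * m3 - (m1 - m4) ^ 2) := Real.sqrt_pos.mpr hD
  set d := Real.sqrt (-4 * m2 * m3 - (m1 - m4) ^ 2) with hddef
  have hd2 : d ^ 2 = -4 * m2 * m3 - (m1 - m4) ^ 2 := Real.sq_sqrt hD.le
  have hm2 : m2 < 0 := by nlinarith [sq_nonneg (m1 - m4)]
  have hWpos : ∀ φ : ℝ, 0 < m3 * cos φ ^ 2 + (m4 - m1) * sin φ * cos φ - m2 * sin φ ^ 2 := by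
    intro φ
    have h1 := sin_sq_add_cos_sq φ
    have key : 4 * m3 * (m3 * cos φ ^ 2 + (m4 - m1) * sin φ * cos φ - m2 * sin φ ^ 2)
        = (2 * m3 * cos φ + (m4 - m1) * sin φ) ^ 2
          + (-4 * m2 * m3 - (m1 - m4) ^ 2) * sin φ ^ 2 := by ring
    rcases eq_or_ne (sin φ) 0 with hs | hs
    · have hco : cos φ ^ 2 = 1 := by rw [hs] at h1; linarith
      rw [hs]; simpa [hco] using hm3
    · nlinarith [sq_nonneg (2 * m3 * cos φ + (m4 - m1) * sin φ),
        mul_pos hD (pow_pos (abs_pos.mpr hs) 2), sq_abs (sin φ)]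
  refine ⟨hWpos, ?_⟩
  have hsum : 0 < d + m3 - m2 := by linarith
  -- the antiderivative
  set F : ℝ → ℝ := fun x =>
      -(1/2) * Real.log (m3 * cos x ^ 2 + (m4 - m1) * sin x * cos x - m2 * sin x ^ 2)
      + (m1 + m4) / d * (x + Real.arctan
          ((((m4 - m1)/2) * (cos x ^ 2 - sin x ^ 2) - (m2 + m3) * sin x * cos x) /
           ((m3 * cos x ^ 2 + (m4 - m1) * sin x * cos x - m2 * sin x ^ 2) + d/2))) with hFdef
  have hderiv : ∀ φ : ℝ, HasDerivAt F
      ((m1 * cos φ ^ 2 + (m2 + m3) * sin φ * cos φ + m4 * sin φ ^ 2) /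
        (m3 * cos φ ^ 2 + (m4 - m1) * sin φ * cos φ - m2 * sin φ ^ 2)) φ := by
    intro φ
    have hpy := sin_sq_add_cos_sq φ
    have hW0 : 0 < m3 * cos φ ^ 2 + (m4 - m1) * sin φ * cos φ - m2 * sin φ ^ 2 := hWpos φ
    have hden : 0 < (m3 * cos φ ^ 2 + (m4 - m1) * sin φ * cos φ - m2 * sin φ ^ 2) + d / 2 := by
      linarith
    have hc := Real.hasDerivAt_cos φ
    have hs := Real.hasDerivAt_sin φ
    have hW : HasDerivAt (fun x : ℝ => m3 * cos x ^ 2 + (m4 - m1) * sin x * cos x - m2 * sin x ^ 2)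
        (2 * (((m4 - m1)/2) * (cos φ ^ 2 - sin φ ^ 2) - (m2 + m3) * sin φ * cos φ)) φ := by
      have h := (((hc.pow 2).const_mul m3).add
          ((hs.const_mul (m4 - m1)).mul hc)).sub ((hs.pow 2).const_mul m2)
      refine h.congr_deriv ?_
      ring
    have hN : HasDerivAt (fun x : ℝ =>
        ((m4 - m1)/2) * (cos x ^ 2 - sin x ^ 2) - (m2 + m3) * sin x * cos x)
        (m3 - m2 - 2 * (m3 * cos φ ^ 2 + (m4 - m1) * sin φ * cos φ - m2 * sin φ ^ 2)) φ := by
      have h := (((hc.pow 2).sub (hs.pow 2)).const_mul ((m4 - m1)/2)).sub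
          ((hs.const_mul (m2 + m3)).mul hc)
      refine h.congr_deriv ?_
      linear_combination (m3 - m2) * hpy
    have hWd : HasDerivAt (fun x : ℝ =>
        (m3 * cos x ^ 2 + (m4 - m1) * sin x * cos x - m2 * sin x ^ 2) + d/2)
        (2 * (((m4 - m1)/2) * (cos φ ^ 2 - sin φ ^ 2) - (m2 + m3) * sin φ * cos φ)) φ :=
      hW.add_const _
    have hg := hN.div hWd hden.ne'
    have harc := hg.arctan
    have hlog := hW.log hW0.ne'
    have hbig := (hlog.const_mul (-(1/2))).add
        (((hasDerivAt_id φ).add harc).const_mul ((m1 + m4) / d))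
    have halg := alg16 (m1 + m4) m2 m3 d
        (m3 * cos φ ^ 2 + (m4 - m1) * sin φ * cos φ - m2 * sin φ ^ 2)
        (((m4 - m1)/2) * (cos φ ^ 2 - sin φ ^ 2) - (m2 + m3) * sin φ * cos φ)
        (m3 - m2 - 2 * (m3 * cos φ ^ 2 + (m4 - m1) * sin φ * cos φ - m2 * sin φ ^ 2))
        (m1 * cos φ ^ 2 + (m2 + m3) * sin φ * cos φ + m4 * sin φ ^ 2)
        hd0 hW0 hsum
        (by linear_combination (m2*m3 + (m4-m1)^2/4 + m2^2 * sin φ ^ 2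
              + (m4-m1)^2/4 * sin φ ^ 2 + (m4-m1)*m3 * sin φ * cos φ
              - (m4-m1)*m2 * sin φ * cos φ + m3^2 * cos φ ^ 2
              + (m4-m1)^2/4 * cos φ ^ 2) * hpy + (1/4) * hd2)
        rfl
        (by linear_combination ((m1 + m4)/2) * hpy)
    rw [← halg]
    convert hbig using 1
    all_goals rfl
  have hcont : Continuous (fun φ : ℝ =>
      (m1 * cos φ ^ 2 + (m2 + m3) * sin φ * cos φ + m4 * sin φ ^ 2) /
        (m3 * cos φ ^ 2 + (m4 - m1) * sin φ * cos φ - m2 * sin φ ^ 2)) := by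
    apply Continuous.div (by continuity) (by continuity)
    exact fun φ => (hWpos φ).ne'
  rw [intervalIntegral.integral_eq_sub_of_hasDerivAt (fun x _ => hderiv x)
      (hcont.intervalIntegrable 0 (2 * π))]
  have h2pi : F (2 * π) - F 0 = (m1 + m4) / d * (2 * π) := by
    simp [hFdef, Real.sin_two_pi, Real.cos_two_pi]
    ring
  rw [h2pi]
  have hπ : (2 : ℝ) * π ≠ 0 := by positivity
  field_simp
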